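/- Fix a real parameter c and a natural number l. For every real x > 0 and every real y with |y| < 1, the series Σ_{ν=0}^{∞} (yᵛ/ν!)·𝒫_ν(x,l) converges, with sum equal to the closed-form generating function (1+y)^{c−1+l} · e^{−xy} (the power (1+y)^{c−1+l} being a real power of the positive real 1+y). -/

import Mathlib

/-- Complementary polynomial of the confluent hypergeometric equation:
`𝒫_ν(x,l) = x^(1-c+ν-l) · e^x · (dᵛ/dtᵛ)(t^(c-1+l) e^(-t)) |_{t=x}` (rpow powers). -/
noncomputable def complConfluent (c : ℝ) (l ν : ℕ) (x : ℝ) : ℝ :=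
  x ^ (1 - c + (ν : ℝ) - (l : ℝ)) * Real.exp x *
    iteratedDeriv ν (fun t : ℝ => t ^ (c - 1 + (l : ℝ)) * Real.exp (-t)) x

/-- `iteratedDeriv` commutes with the coercion `ℝ → ℂ`. -/
lemma iteratedDeriv_ofReal_comp (g : ℝ → ℝ) (n : ℕ) :
    iteratedDeriv n (fun t : ℝ => ((g t : ℝ) : ℂ)) = fun t => ((iteratedDeriv n g t : ℝ) : ℂ) := by
  induction n with
  | zero => simp
  | succ n ih =>
    funext t
    rw [iteratedDeriv_succ, iteratedDeriv_succ, ih]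
    by_cases hd : DifferentiableAt ℝ (iteratedDeriv n g) t
    · exact hd.hasDerivAt.ofReal_comp.deriv
    · have h2 : ¬ DifferentiableAt ℝ (fun t : ℝ => ((iteratedDeriv n g t : ℝ) : ℂ)) t := by
        intro hc
        apply hd
        have : (fun t : ℝ => (Complex.reCLM) ((iteratedDeriv n g t : ℝ) : ℂ)) =
            iteratedDeriv n g := by
          funext s; simp
        have h3 := Complex.reCLM.differentiable.differentiableAt.comp t hc
        rw [show (⇑Complex.reCLM ∘ fun t : ℝ => ((iteratedDeriv n g t : ℝ) : ℂ)) =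
          iteratedDeriv n g from this] at h3
        exact h3
      rw [deriv_zero_of_not_differentiableAt hd, deriv_zero_of_not_differentiableAt h2,
        Complex.ofReal_zero]

theorem complConfluent_genFun (c : ℝ) (l : ℕ) (x y : ℝ) (hx : 0 < x) (hy : |y| < 1) :
    HasSum (fun ν : ℕ => y ^ ν / (Nat.factorial ν : ℝ) * complConfluent c l ν x)
      ((1 + y) ^ (c - 1 + (l : ℝ)) * Real.exp (-(x * y))) := by
  obtain ⟨hy1, hy2⟩ := abs_lt.mp hy
  have h1y : (0 : ℝ) < 1 + y := by linarith
  set a : ℝ := c - 1 + (l : ℝ) with ha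
  set f : ℝ → ℝ := fun t => t ^ a * Real.exp (-t) with hf
  set F : ℂ → ℂ := fun z => z ^ (a : ℂ) * Complex.exp (-z) with hFdef
  -- F is differentiable on the right half plane
  have hFdiff : ∀ z : ℂ, 0 < z.re → DifferentiableAt ℂ F z := by
    intro z hz
    have h1 : DifferentiableAt ℂ (fun w : ℂ => w ^ (a : ℂ)) z :=
      ((hasDerivAt_id z).cpow_const (Or.inl hz)).differentiableAt
    exact h1.mul ((Complex.differentiable_exp.comp differentiable_neg).differentiableAt)
  have hS : IsOpen {z : ℂ | 0 < z.re} := isOpen_lt continuous_const Complex.continuous_re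
  have hFan : AnalyticOnNhd ℂ F {z : ℂ | 0 < z.re} :=
    (DifferentiableOn.analyticOnNhd (fun z hz => (hFdiff z hz).differentiableWithinAt) hS)
  -- all iterated derivatives of F are analytic on the half plane
  have hFit : ∀ n : ℕ, AnalyticOnNhd ℂ (iteratedDeriv n F) {z : ℂ | 0 < z.re} := by
    intro n
    induction n with
    | zero => simpa [iteratedDeriv_zero] using hFan
    | succ n ih => rw [iteratedDeriv_succ]; exact ih.deriv
  -- iterated derivatives of F restricted to positive reals
  have key : ∀ n : ℕ, ∀ t : ℝ, 0 < t →
      iteratedDeriv n (fun s : ℝ => F (s : ℂ)) t = iteratedDeriv n F (t : ℂ) := by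
    intro n
    induction n with
    | zero => intro t _; simp
    | succ n ih =>
      intro t ht
      rw [iteratedDeriv_succ, iteratedDeriv_succ]
      have hev : iteratedDeriv n (fun s : ℝ => F (s : ℂ)) =ᶠ[nhds t]
          fun s : ℝ => iteratedDeriv n F (s : ℂ) := by
        filter_upwards [isOpen_Ioi.mem_nhds (Set.mem_Ioi.mpr ht)] with s hs
        exact ih s hs
      rw [hev.deriv_eq]
      have hdF : DifferentiableAt ℂ (iteratedDeriv n F) (t : ℂ) :=
        (hFit n (t : ℂ) (by simpa using ht)).differentiableAt
      exact hdF.hasDerivAt.comp_ofReal.deriv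
  -- F agrees with (f : ℝ → ℂ) on positive reals
  have hEq : Set.EqOn (fun s : ℝ => F (s : ℂ)) (fun s : ℝ => ((f s : ℝ) : ℂ)) (Set.Ioi 0) := by
    intro s hs
    have hs0 : (0 : ℝ) ≤ s := (Set.mem_Ioi.mp hs).le
    simp only [hFdef, hf]
    rw [← Complex.ofReal_cpow hs0]
    push_cast
    ring
  -- hence iterated derivatives of F on [0,∞)ℝ coincide with those of f
  have hfd : ∀ n : ℕ, iteratedDeriv n F (x : ℂ) = ((iteratedDeriv n f x : ℝ) : ℂ) := by
    intro n
    rw [← key n x hx, hEq.iteratedDeriv_of_isOpen isOpen_Ioi n (Set.mem_Ioi.mpr hx),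
      iteratedDeriv_ofReal_comp]
  -- Taylor series of F on the ball of radius x around x
  have hball : DifferentiableOn ℂ F (Metric.ball (x : ℂ) x) := by
    intro z hz
    refine (hFdiff z ?_).differentiableWithinAt
    have : |z.re - x| ≤ ‖z - (x : ℂ)‖ := by
      simpa using Complex.abs_re_le_norm (z - (x : ℂ))
    have h2 : ‖z - (x : ℂ)‖ < x := by
      simpa [Complex.dist_eq] using (Metric.mem_ball.mp hz)
    have := abs_lt.mp (lt_of_le_of_lt this h2)
    linarith [this.1]
  have hz : ((x + x * y : ℝ) : ℂ) ∈ Metric.ball (x : ℂ) x := by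
    rw [Metric.mem_ball, Complex.dist_eq]
    have : ((x + x * y : ℝ) : ℂ) - (x : ℂ) = ((x * y : ℝ) : ℂ) := by push_cast; ring
    rw [this, Complex.norm_real, Real.norm_eq_abs, abs_mul, abs_of_pos hx]
    calc x * |y| < x * 1 := by exact (mul_lt_mul_iff_right₀ hx).mpr hy
    _ = x := mul_one x
  have H := Complex.hasSum_taylorSeries_on_ball hball hz
  -- rewrite the Taylor series in real terms
  have Hterm : (fun n : ℕ => ((Nat.factorial n : ℂ))⁻¹ • (((x + x * y : ℝ) : ℂ) - (x : ℂ)) ^ n •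
      iteratedDeriv n F (x : ℂ)) =
      fun n : ℕ => (((x * y) ^ n / (Nat.factorial n : ℝ) * iteratedDeriv n f x : ℝ) : ℂ) := by
    funext n
    rw [hfd n]
    have : ((x + x * y : ℝ) : ℂ) - (x : ℂ) = ((x * y : ℝ) : ℂ) := by push_cast; ring
    rw [this]
    push_cast
    rw [smul_eq_mul, smul_eq_mul]
    ring
  rw [Hterm] at H
  have HFz : F ((x + x * y : ℝ) : ℂ) = ((f (x + x * y) : ℝ) : ℂ) :=
    hEq (by simp [Set.mem_Ioi]; nlinarith)
  rw [HFz] at H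
  have Hreal : HasSum (fun n : ℕ => (x * y) ^ n / (Nat.factorial n : ℝ) * iteratedDeriv n f x)
      (f (x + x * y)) := Complex.hasSum_ofReal.mp H
  have Hmul := Hreal.mul_left (x ^ (-a) * Real.exp x)
  -- identify the terms
  have hterm : ∀ ν : ℕ, x ^ (-a) * Real.exp x *
      ((x * y) ^ ν / (Nat.factorial ν : ℝ) * iteratedDeriv ν f x) =
      y ^ ν / (Nat.factorial ν : ℝ) * complConfluent c l ν x := by
    intro ν
    have hpow : x ^ (1 - c + (ν : ℝ) - (l : ℝ)) = x ^ (ν : ℝ) * x ^ (-a) := by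
      rw [← Real.rpow_add hx]
      congr 1; rw [ha]; ring
    have hxn : x ^ (ν : ℝ) = x ^ ν := Real.rpow_natCast x ν
    unfold complConfluent
    rw [hpow, hxn, mul_pow]
    ring
  -- identify the sum
  have hsum : x ^ (-a) * Real.exp x * f (x + x * y) =
      (1 + y) ^ (c - 1 + (l : ℝ)) * Real.exp (-(x * y)) := by
    have hxy : x + x * y = x * (1 + y) := by ring
    simp only [hf, hxy]
    rw [Real.mul_rpow hx.le h1y.le]
    rw [show x ^ (-a) * Real.exp x * (x ^ a * (1 + y) ^ a * Real.exp (-(x * (1 + y)))) =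
      (x ^ (-a) * x ^ a) * (1 + y) ^ a * (Real.exp x * Real.exp (-(x * (1 + y)))) by ring]
    rw [← Real.rpow_add hx, neg_add_cancel, Real.rpow_zero, ← Real.exp_add]
    rw [show x + -(x * (1 + y)) = -(x * y) by ring]
    ring
  rw [hsum, funext hterm] at Hmul
  exact Hmul
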